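/- arXiv:2502.09359 — 2 statements merged into one kernel-verified Lean document; each statement's English description precedes it below -/
import Mathlib

section
/- Let k ≥ 2 be an integer. Then the (2k−2)-fold iterated Maass raising operator applied to the function τ ↦ τ^{k−1} satisfies R_{2−2k}^{2k−2}(τ^{k−1}) = (2k−2)! · (conj(τ)/v²)^{k−1} for all τ = u+iv ∈ ℍ. -/
noncomputable section

open Complex Real Finset

/-- The upper half-plane, as a subset of `ℂ`. -/
def UpperHalf : Set ℂ := {z : ℂ | 0 < z.im}

/-- The holomorphic Wirtinger derivative `∂f/∂τ = (1/2)(∂f/∂u − i ∂f/∂v)`. -/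
def wirtinger (f : ℂ → ℂ) (τ : ℂ) : ℂ :=
  (1 / 2) * (fderiv ℝ f τ 1 - Complex.I * fderiv ℝ f τ Complex.I)

/-- The antiholomorphic Wirtinger derivative `∂f/∂τ̄ = (1/2)(∂f/∂u + i ∂f/∂v)`. -/
def wirtingerBar (f : ℂ → ℂ) (τ : ℂ) : ℂ :=
  (1 / 2) * (fderiv ℝ f τ 1 + Complex.I * fderiv ℝ f τ Complex.I)

/-- The Maass raising operator `R_κ(f) = 2i ∂f/∂τ + (κ/v) f`. -/
def raise (κ : ℤ) (f : ℂ → ℂ) (τ : ℂ) : ℂ :=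
  2 * Complex.I * wirtinger f τ + ((κ : ℂ) / (τ.im : ℂ)) * f τ

/-- Iterated Maass raising operator `R_κ^n = R_{κ+2(n−1)} ∘ ⋯ ∘ R_κ`. -/
def raiseIter (κ : ℤ) : ℕ → (ℂ → ℂ) → (ℂ → ℂ)
  | 0, f => f
  | n + 1, f => raise (κ + 2 * (n : ℤ)) (raiseIter κ n f)

/-- The flipping operator `𝔉_{2−2k}(f)(τ) = −(v^{2k−2}/(2k−2)!) conj(R_{2−2k}^{2k−2}(f)(τ))`. -/
def flipOp (k : ℕ) (f : ℂ → ℂ) (τ : ℂ) : ℂ :=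
  -(((τ.im : ℂ) ^ (2 * k - 2)) / ((2 * k - 2).factorial : ℂ)) *
    (starRingEnd ℂ) (raiseIter (2 - 2 * (k : ℤ)) (2 * k - 2) f τ)

/-- The weight `−2k` flipping operator `𝔉_{−2k}(f)(τ) = −(v^{2k}/(2k)!) conj(R_{−2k}^{2k}(f)(τ))`. -/
def flipOpNeg (k : ℕ) (f : ℂ → ℂ) (τ : ℂ) : ℂ :=
  -(((τ.im : ℂ) ^ (2 * k)) / ((2 * k).factorial : ℂ)) *
    (starRingEnd ℂ) (raiseIter (-(2 * (k : ℤ))) (2 * k) f τ)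

/-- The Bol-type operator `𝒟 = (1/(2πi)) ∂/∂τ`. -/
def bol (f : ℂ → ℂ) : ℂ → ℂ := fun τ => (1 / (2 * (π : ℂ) * Complex.I)) * wirtinger f τ

/-- Iterates `𝒟^r` of the Bol-type operator. -/
def bolIter (r : ℕ) (f : ℂ → ℂ) : ℂ → ℂ := bol^[r] f

/-- The shadow operator `ξ_{2−2k}(f)(τ) = 2i v^{2−2k} conj(∂f/∂τ̄(τ))`. -/
def xiOp (k : ℕ) (f : ℂ → ℂ) (τ : ℂ) : ℂ :=
  2 * Complex.I * (τ.im : ℂ) ^ ((2 : ℤ) - 2 * k) * (starRingEnd ℂ) (wirtingerBar f τ)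

/-- Integral binary quadratic forms `[a,b,c]` of discriminant `D`. -/
def QD (D : ℤ) : Type := {q : ℤ × ℤ × ℤ // q.2.1 ^ 2 - 4 * q.1 * q.2.2 = D}

/-- `Q(z,1) = a z² + b z + c`. -/
def qval (q : ℤ × ℤ × ℤ) (z : ℂ) : ℂ :=
  (q.1 : ℂ) * z ^ 2 + (q.2.1 : ℂ) * z + (q.2.2 : ℂ)

/-- `Q_τ = (a(u²+v²) + bu + c)/v`. -/
def qtau (q : ℤ × ℤ × ℤ) (τ : ℂ) : ℝ :=
  ((q.1 : ℝ) * (τ.re ^ 2 + τ.im ^ 2) + (q.2.1 : ℝ) * τ.re + (q.2.2 : ℝ)) / τ.im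

/-- The exceptional set `E_D`, the union of the geodesics `Q_τ = 0`. -/
def ED (D : ℤ) : Set ℂ := {τ : ℂ | ∃ q : QD D, qtau q.1 τ = 0}

/-- The incomplete beta function `β(x;r,s) = ∫₀ˣ t^{r−1}(1−t)^{s−1} dt`. -/
def betaInt (x r s : ℝ) : ℝ := ∫ t in (0 : ℝ)..x, t ^ (r - 1) * (1 - t) ^ (s - 1)

/-- The locally harmonic Maass form `𝓕_{1−k,D}` of Bringmann–Kane–Kohnen. -/
def FBKK (k : ℕ) (D : ℕ) (τ : ℂ) : ℂ :=
  (((D : ℝ) ^ ((1 : ℝ) / 2 - (k : ℝ)) / (2 * ((2 * k - 2).choose (k - 1) : ℝ) * π) : ℝ) : ℂ) *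
    ∑' q : QD (D : ℤ),
      ((Real.sign (qtau q.1 τ) : ℝ) : ℂ) * qval q.1 τ ^ (k - 1) *
        ((betaInt ((D : ℝ) * τ.im ^ 2 / ‖qval q.1 τ‖ ^ 2)
            ((k : ℝ) - 1 / 2) (1 / 2) : ℝ) : ℂ)

/-- The function `𝒢_{−k,D}` of Bringmann–Mono. -/
def GBM (k : ℕ) (D : ℕ) (τ : ℂ) : ℂ :=
  (1 / 2 : ℂ) *
    ∑' q : QD (D : ℤ),
      qval q.1 τ ^ k *
        ((betaInt ((D : ℝ) * τ.im ^ 2 / ‖qval q.1 τ‖ ^ 2)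
            ((k : ℝ) + 1 / 2) (1 / 2) : ℝ) : ℂ)

/-- The rising factorial `(a)_n = a(a+1)⋯(a+n−1)`. -/
def risingFactorial (a : ℤ) (n : ℕ) : ℤ := ∏ i ∈ Finset.range n, (a + (i : ℤ))



/-! ### Auxiliary lemmas for `raiseIter_pow` -/

section Aux

lemma wirtinger_congr {f g : ℂ → ℂ} {τ : ℂ} (h : f =ᶠ[nhds τ] g) :
    wirtinger f τ = wirtinger g τ := by
  unfold wirtinger; rw [h.fderiv_eq]

lemma wirtinger_const (c : ℂ) (τ : ℂ) : wirtinger (fun _ => c) τ = 0 := by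
  unfold wirtinger; rw [fderiv_fun_const]; simp

lemma wirtinger_mul {f g : ℂ → ℂ} {τ : ℂ} (hf : DifferentiableAt ℝ f τ)
    (hg : DifferentiableAt ℝ g τ) :
    wirtinger (fun z => f z * g z) τ = wirtinger f τ * g τ + f τ * wirtinger g τ := by
  unfold wirtinger
  rw [fderiv_fun_mul hf hg]
  simp only [ContinuousLinearMap.add_apply, ContinuousLinearMap.smul_apply, smul_eq_mul]
  ring

lemma wirtinger_pow {f : ℂ → ℂ} {τ : ℂ} (hf : DifferentiableAt ℝ f τ) (n : ℕ) :
    wirtinger (fun z => f z ^ n) τ = (n : ℂ) * f τ ^ (n - 1) * wirtinger f τ := by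
  induction n with
  | zero => simp [wirtinger_const]
  | succ n ih =>
    have : (fun z => f z ^ (n+1)) = fun z => f z ^ n * f z := by
      funext z; rw [pow_succ]
    rw [this, wirtinger_mul (f := fun z => f z ^ n) (hf.pow n) hf, ih]
    cases n with
    | zero => simp
    | succ m =>
      simp only [Nat.add_sub_cancel]
      push_cast
      rw [pow_succ]
      ring

lemma wirtinger_sum {ι : Type*} (s : Finset ι) {f : ι → ℂ → ℂ} {τ : ℂ}
    (hf : ∀ i ∈ s, DifferentiableAt ℝ (f i) τ) :
    wirtinger (fun z => ∑ i ∈ s, f i z) τ = ∑ i ∈ s, wirtinger (f i) τ := by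
  unfold wirtinger
  rw [fderiv_fun_sum hf]
  simp only [ContinuousLinearMap.sum_apply]
  rw [Finset.mul_sum, ← Finset.sum_sub_distrib, Finset.mul_sum]

lemma diff_conj (τ : ℂ) : DifferentiableAt ℝ (fun z : ℂ => (starRingEnd ℂ) z) τ :=
  Complex.conjCLE.differentiableAt

lemma wirtinger_conj (τ : ℂ) : wirtinger (fun z : ℂ => (starRingEnd ℂ) z) τ = 0 := by
  unfold wirtinger
  have : fderiv ℝ (fun z : ℂ => (starRingEnd ℂ) z) τ = (Complex.conjCLE : ℂ →L[ℝ] ℂ) :=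
    (Complex.conjCLE : ℂ →L[ℝ] ℂ).hasFDerivAt.fderiv
  rw [this]
  simp [Complex.conjCLE_apply]

lemma diff_imc (τ : ℂ) : DifferentiableAt ℝ (fun z : ℂ => ((z.im : ℝ) : ℂ)) τ :=
  (Complex.ofRealCLM.comp Complex.imCLM).differentiableAt

lemma hasFDeriv_Vinv {τ : ℂ} (h : (τ.im:ℂ) ≠ 0) :
    HasFDerivAt (fun z : ℂ => ((z.im:ℝ):ℂ)⁻¹)
      ((-ContinuousLinearMap.mulLeftRight ℝ ℂ ((τ.im:ℂ))⁻¹ ((τ.im:ℂ))⁻¹).comp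
        (Complex.ofRealCLM.comp Complex.imCLM)) τ :=
  (hasFDerivAt_inv' h).comp τ (Complex.ofRealCLM.comp Complex.imCLM).hasFDerivAt

lemma diff_Vinv {τ : ℂ} (h : (τ.im:ℂ) ≠ 0) :
    DifferentiableAt ℝ (fun z : ℂ => ((z.im:ℝ):ℂ)⁻¹) τ := (hasFDeriv_Vinv h).differentiableAt

lemma wirtinger_Vinv {τ : ℂ} (h : (τ.im:ℂ) ≠ 0) :
    wirtinger (fun z : ℂ => ((z.im:ℝ):ℂ)⁻¹) τ = Complex.I/2 * ((τ.im:ℂ)⁻¹)^2 := by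
  unfold wirtinger
  rw [(hasFDeriv_Vinv h).fderiv]
  simp [ContinuousLinearMap.mulLeftRight_apply]
  ring

lemma wirtinger_sub_conj (τ : ℂ) : wirtinger (fun z : ℂ => z - (starRingEnd ℂ) z) τ = 1 := by
  unfold wirtinger
  rw [fderiv_fun_sub differentiableAt_fun_id (diff_conj τ)]
  have h : fderiv ℝ (fun z : ℂ => (starRingEnd ℂ) z) τ = (Complex.conjCLE : ℂ →L[ℝ] ℂ) :=
    (Complex.conjCLE : ℂ →L[ℝ] ℂ).hasFDerivAt.fderiv
  rw [h, fderiv_id']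
  simp [Complex.conjCLE_apply]
  ring_nf
  rw [Complex.I_sq]
  ring

lemma raise_congr' {f g : ℂ → ℂ} {τ : ℂ} (h : f =ᶠ[nhds τ] g) (κ : ℤ) :
    raise κ f τ = raise κ g τ := by
  unfold raise
  rw [wirtinger_congr h, h.eq_of_nhds]

lemma raise_closed' {τ : ℂ} (h : (τ.im:ℂ) ≠ 0) (κ : ℤ) (n : ℕ) (p : ℂ → ℂ)
    (hp : DifferentiableAt ℝ p τ) :
    raise κ (fun z => p z * ((z.im:ℂ)⁻¹)^n) τ
      = (2*Complex.I*wirtinger p τ + ((κ:ℂ) - n) * (τ.im:ℂ)⁻¹ * p τ) * ((τ.im:ℂ)⁻¹)^n := by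
  unfold raise
  rw [wirtinger_mul (g := fun z => ((z.im:ℂ)⁻¹)^n) hp ((diff_Vinv h).pow n), wirtinger_pow (diff_Vinv h) n, wirtinger_Vinv h,
    div_eq_mul_inv]
  cases n with
  | zero => simp [div_eq_mul_inv]
  | succ s =>
    simp only [Nat.add_sub_cancel]
    push_cast
    simp only [pow_succ]
    ring_nf
    rw [Complex.I_sq]
    ring

lemma wirtinger_term (τ : ℂ) (a b : ℕ) (c : ℂ) :
    wirtinger (fun z => (z - (starRingEnd ℂ) z)^a * ((starRingEnd ℂ) z)^b * c) τ
      = (a:ℂ) * (τ - (starRingEnd ℂ) τ)^(a-1) * ((starRingEnd ℂ) τ)^b * c := by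
  have hw : DifferentiableAt ℝ (fun z : ℂ => z - (starRingEnd ℂ) z) τ :=
    differentiableAt_fun_id.sub (diff_conj τ)
  have h1 : DifferentiableAt ℝ (fun z : ℂ => (z - (starRingEnd ℂ) z)^a) τ := hw.pow a
  have h2 : DifferentiableAt ℝ (fun z : ℂ => ((starRingEnd ℂ) z)^b) τ := (diff_conj τ).pow b
  rw [wirtinger_mul (f := fun z => (z - (starRingEnd ℂ) z)^a * ((starRingEnd ℂ) z)^b) (h1.mul h2) (differentiableAt_const c), wirtinger_const,
    wirtinger_mul h1 h2, wirtinger_pow hw a, wirtinger_pow (diff_conj τ) b,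
    wirtinger_sub_conj, wirtinger_conj τ]
  ring

lemma risingFactorial_succ' (x : ℤ) (n : ℕ) :
    risingFactorial x (n+1) = risingFactorial x n * (x + n) := by
  unfold risingFactorial; rw [Finset.prod_range_succ]

lemma prod_add_one' (N : ℕ) : ∏ j ∈ Finset.range N, ((j:ℤ)+1) = N.factorial := by
  induction N with
  | zero => simp
  | succ n ih =>
    rw [Finset.prod_range_succ, ih, Nat.factorial_succ]
    push_cast
    ring

lemma risingFactorial_neg (N : ℕ) : risingFactorial (-(N:ℤ)) N = (-1)^N * N.factorial := by
  unfold risingFactorial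
  calc ∏ i ∈ Finset.range N, (-(N:ℤ) + i)
      = ∏ i ∈ Finset.range N, (-1) * (((N - 1 - i : ℕ):ℤ) + 1) := by
        refine Finset.prod_congr rfl fun i hi => ?_
        have hi' := Finset.mem_range.mp hi
        have h : ((N - 1 - i : ℕ):ℤ) = (N:ℤ) - 1 - i := by omega
        rw [h]; ring
    _ = (-1)^N * ∏ i ∈ Finset.range N, (((N - 1 - i : ℕ):ℤ) + 1) := by
        rw [Finset.prod_mul_distrib, Finset.prod_const, Finset.card_range]
    _ = (-1)^N * N.factorial := by
        rw [Finset.prod_range_reflect (fun j => ((j:ℤ)+1)) N, prod_add_one']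

lemma key_raiseIter (m : ℕ) (n : ℕ) : ∀ τ : ℂ, 0 < τ.im →
    raiseIter (-(2 * (m:ℤ))) n (fun z => z ^ m) τ =
      (∑ a ∈ Finset.range (m+1),
        (τ - (starRingEnd ℂ) τ) ^ a * ((starRingEnd ℂ) τ) ^ (m - a) *
          ((m.choose a : ℂ) * ((risingFactorial ((a:ℤ) - 2*m) n : ℤ) : ℂ)))
        * ((τ.im : ℂ)⁻¹) ^ n := by
  induction n with
  | zero =>
    intro τ hτ
    simp only [raiseIter, risingFactorial, Finset.range_zero, Finset.prod_empty,
      Int.cast_one, mul_one, pow_zero]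
    rw [← add_pow, sub_add_cancel]
  | succ n ih =>
    intro τ hτ
    have him : (τ.im : ℂ) ≠ 0 := Complex.ofReal_ne_zero.mpr (ne_of_gt hτ)
    have hUopen : IsOpen {z : ℂ | 0 < z.im} := isOpen_lt continuous_const Complex.continuous_im
    have hU : {z : ℂ | 0 < z.im} ∈ nhds τ := hUopen.mem_nhds hτ
    have hEq : raiseIter (-(2*(m:ℤ))) n (fun z => z^m) =ᶠ[nhds τ]
        (fun z => (∑ a ∈ Finset.range (m+1),
          (z - (starRingEnd ℂ) z) ^ a * ((starRingEnd ℂ) z) ^ (m - a) *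
            ((m.choose a : ℂ) * ((risingFactorial ((a:ℤ) - 2*m) n : ℤ) : ℂ)))
          * ((z.im : ℂ)⁻¹) ^ n) :=
      Filter.eventuallyEq_of_mem hU (fun z hz => ih z hz)
    have hdiff : ∀ a ∈ Finset.range (m+1), DifferentiableAt ℝ
        (fun z : ℂ => (z - (starRingEnd ℂ) z) ^ a * ((starRingEnd ℂ) z) ^ (m - a) *
          ((m.choose a : ℂ) * ((risingFactorial ((a:ℤ) - 2*m) n : ℤ) : ℂ))) τ := by
      intro a _
      exact (((differentiableAt_fun_id.sub (diff_conj τ)).pow a).mul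
        ((diff_conj τ).pow (m-a))).mul_const _
    have hS : DifferentiableAt ℝ (fun z : ℂ => ∑ a ∈ Finset.range (m+1),
        (z - (starRingEnd ℂ) z) ^ a * ((starRingEnd ℂ) z) ^ (m - a) *
          ((m.choose a : ℂ) * ((risingFactorial ((a:ℤ) - 2*m) n : ℤ) : ℂ))) τ :=
      DifferentiableAt.fun_sum hdiff
    have hw2 : 2 * Complex.I = (τ - (starRingEnd ℂ) τ) * (τ.im:ℂ)⁻¹ := by
      rw [Complex.sub_conj]
      push_cast
      field_simp
    simp only [raiseIter]
    rw [raise_congr' hEq, raise_closed' him _ n _ hS, wirtinger_sum _ hdiff,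
      Finset.sum_congr rfl (fun a _ => wirtinger_term τ a (m-a) _)]
    simp only [risingFactorial_succ']
    push_cast
    rw [hw2, add_mul, Finset.mul_sum, Finset.mul_sum, Finset.sum_mul, Finset.sum_mul,
      ← Finset.sum_add_distrib, Finset.sum_mul]
    refine Finset.sum_congr rfl fun a ha => ?_
    cases a with
    | zero =>
      push_cast
      ring
    | succ b =>
      simp only [Nat.add_sub_cancel]
      push_cast
      ring

end Aux

/-- `R_{2−2k}^{2k−2}(τ^{k−1}) = (2k−2)! (τ̄/v²)^{k−1}` on `ℍ`. -/
theorem raiseIter_pow (k : ℕ) (hk : 2 ≤ k) (τ : ℂ) (hτ : 0 < τ.im) :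
    raiseIter (2 - 2 * (k : ℤ)) (2 * k - 2) (fun z => z ^ (k - 1)) τ
      = ((2 * k - 2).factorial : ℂ) * ((starRingEnd ℂ) τ / (τ.im : ℂ) ^ 2) ^ (k - 1) := by
  have hm1 : 1 ≤ k - 1 := by omega
  have hκ : (2 - 2*(k:ℤ)) = -(2 * ((k-1 : ℕ) : ℤ)) := by omega
  have hcnt : 2*k - 2 = 2*(k-1) := by omega
  rw [hκ, hcnt]
  rw [key_raiseIter (k-1) (2*(k-1)) τ hτ]
  set m := k - 1 with hmdef
  have him : (τ.im : ℂ) ≠ 0 := Complex.ofReal_ne_zero.mpr (ne_of_gt hτ)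
  have hsum : (∑ a ∈ Finset.range (m+1),
        (τ - (starRingEnd ℂ) τ) ^ a * ((starRingEnd ℂ) τ) ^ (m - a) *
          ((m.choose a : ℂ) * ((risingFactorial ((a:ℤ) - 2*m) (2*m) : ℤ) : ℂ)))
      = ((2*m).factorial : ℂ) * ((starRingEnd ℂ) τ) ^ m := by
    rw [Finset.sum_eq_single 0]
    · have h0 : ((0:ℕ):ℤ) - 2*m = -( ((2*m : ℕ)):ℤ) := by push_cast; ring
      rw [h0, risingFactorial_neg (2*m)]
      have : ((-1:ℤ))^(2*m) = 1 := by
        rw [pow_mul]; norm_num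
      rw [this]
      simp only [Nat.sub_zero, Nat.choose_zero_right, Nat.cast_one, pow_zero, one_mul, mul_one]
      push_cast
      ring
    · intro a ha ha0
      have ham : a ≤ m := by
        have := Finset.mem_range.mp ha; omega
      have ha1 : 1 ≤ a := Nat.one_le_iff_ne_zero.mpr ha0
      have hzero : risingFactorial ((a:ℤ) - 2*m) (2*m) = 0 := by
        unfold risingFactorial
        apply Finset.prod_eq_zero (i := 2*m - a)
        · exact Finset.mem_range.mpr (by omega)
        · have : ((2*m - a : ℕ):ℤ) = 2*(m:ℤ) - a := by omega
          rw [this]; ring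
      rw [hzero]
      simp
    · intro h
      exact absurd (Finset.mem_range.mpr (by omega)) h
  rw [hsum]
  rw [div_pow, ← pow_mul]
  have hne : ((τ.im:ℂ)^2)^m ≠ 0 := by
    apply pow_ne_zero; exact pow_ne_zero _ him
  field_simp
  rw [one_div, inv_pow, mul_assoc, inv_mul_cancel₀ (pow_ne_zero _ him), mul_one]


end
end

section
/- Let k ≥ 2 be an integer, let D be a positive non-square discriminant, and let Q = [a,b,c] be an integral binary quadratic form with b² − 4ac = D. Then for all τ ∈ ℍ, 𝔉_{2−2k}(Q(·,1)^{k−1})(τ) = −Q(τ,1)^{k−1}, where Q(z,1) = az² + bz + c. -/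
noncomputable section

open Complex Real Finset

namespace FlipAux

open Polynomial

def Vp (m : ℤ) (τ : ℂ) : ℂ := ((τ.im : ℂ)) ^ m

def Cc (N n j : ℕ) : ℂ := (-1) ^ (n + j) * (n.choose j : ℂ) * ((N - j).descFactorial (n - j) : ℂ)

lemma wirtinger_hasFDeriv {f : ℂ → ℂ} {L : ℂ →L[ℝ] ℂ} {τ : ℂ} (h : HasFDerivAt f L τ) :
    wirtinger f τ = (1 / 2) * (L 1 - Complex.I * L Complex.I) := by
  rw [wirtinger, h.fderiv]

lemma wirtinger_congr {f g : ℂ → ℂ} {τ : ℂ} (h : f =ᶠ[nhds τ] g) :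
    wirtinger f τ = wirtinger g τ := by
  rw [wirtinger, wirtinger, h.fderiv_eq]

lemma hasFDerivAt_Vp (m : ℤ) {τ : ℂ} (h : τ.im ≠ 0) :
    HasFDerivAt (Vp m)
      ((ContinuousLinearMap.smulRight (1 : ℝ →L[ℝ] ℝ) ((m : ℂ) * Vp (m - 1) τ)).comp
        Complex.imCLM) τ := by
  have h0 : ((τ.im : ℝ) : ℂ) ≠ 0 := by simpa using h
  have h1 : HasDerivAt (fun z : ℂ => z ^ m) ((m : ℂ) * ((τ.im : ℝ) : ℂ) ^ (m - 1))
      ((τ.im : ℝ) : ℂ) := hasDerivAt_zpow m _ (Or.inl h0)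
  have h2 : HasDerivAt (fun y : ℝ => ((y : ℂ)) ^ m) ((m : ℂ) * ((τ.im : ℝ) : ℂ) ^ (m - 1)) τ.im :=
    h1.comp_ofReal
  exact h2.hasFDerivAt.comp τ Complex.imCLM.hasFDerivAt

lemma hasFDerivAt_poly (q : ℂ[X]) (τ : ℂ) :
    HasFDerivAt (fun z => q.eval z)
      ((ContinuousLinearMap.smulRight (1 : ℂ →L[ℂ] ℂ) (q.derivative.eval τ)).restrictScalars ℝ)
      τ :=
  (q.hasDerivAt τ).hasFDerivAt.restrictScalars ℝ

lemma wirtinger_Vp_mul (m : ℤ) (q : ℂ[X]) {τ : ℂ} (h : τ.im ≠ 0) :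
    wirtinger (fun z => Vp m z * q.eval z) τ
      = Vp m τ * q.derivative.eval τ
        - Complex.I / 2 * (m : ℂ) * Vp (m - 1) τ * q.eval τ := by
  have H := (hasFDerivAt_Vp m h).mul (hasFDerivAt_poly q τ)
  rw [wirtinger_hasFDeriv (f := fun z => Vp m z * q.eval z) H]
  simp only [ContinuousLinearMap.add_apply, ContinuousLinearMap.smul_apply,
    ContinuousLinearMap.comp_apply, ContinuousLinearMap.smulRight_apply,
    ContinuousLinearMap.one_apply, Complex.imCLM_apply, Complex.one_im, Complex.I_im,
    ContinuousLinearMap.coe_restrictScalars', Complex.real_smul, smul_eq_mul]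
  push_cast
  ring_nf
  rw [Complex.I_sq]
  ring


lemma Cc_zero_of_lt (N : ℕ) {n j : ℕ} (h : n < j) : Cc N n j = 0 := by
  simp [Cc, Nat.choose_eq_zero_of_lt h]

lemma Cc_succ_zero (N n : ℕ) (hn : n < N) : Cc N (n + 1) 0 = ((n : ℂ) - N) * Cc N n 0 := by
  have h4 : ((N - n : ℕ) : ℂ) = (N : ℂ) - n := Nat.cast_sub hn.le
  simp only [Cc, Nat.choose_zero_right, Nat.sub_zero, Nat.cast_one, mul_one,
    Nat.descFactorial_succ]
  push_cast [h4]
  ring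

lemma Cc_succ_succ (N n : ℕ) (hn : n < N) (j : ℕ) :
    Cc N (n + 1) (j + 1) = Cc N n j + ((n : ℂ) + j + 1 - N) * Cc N n (j + 1) := by
  rcases lt_or_ge j n with hj | hj
  · -- main case j < n
    have e1 : N - j = (N - j - 1) + 1 := by omega
    have e2 : n - j = (n - j - 1) + 1 := by omega
    have e3 : N - (j + 1) = N - j - 1 := by omega
    have e4 : (n + 1) - (j + 1) = (n - j - 1) + 1 := by omega
    have e5 : n - (j + 1) = n - j - 1 := by omega
    have h1 : (N - j).descFactorial (n - j)
        = ((N - j - 1) + 1) * ((N - j - 1).descFactorial (n - j - 1)) := by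
      rw [e2, e1, Nat.succ_descFactorial_succ]
      simp
    have h2 : (N - j - 1).descFactorial ((n - j - 1) + 1)
        = (N - n) * ((N - j - 1).descFactorial (n - j - 1)) := by
      rw [Nat.descFactorial_succ, show (N - j - 1) - (n - j - 1) = N - n by omega]
    have h3 : (n + 1).choose (j + 1) = n.choose j + n.choose (j + 1) :=
      Nat.choose_succ_succ' n j
    have h5 : ((n - j : ℕ) : ℂ) = (n : ℂ) - j := Nat.cast_sub hj.le
    have h4 : (n.choose (j + 1) : ℂ) * ((j : ℂ) + 1) = (n.choose j : ℂ) * ((n : ℂ) - j) := by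
      rw [← h5]
      exact_mod_cast Nat.choose_succ_right_eq n j
    have cNn : ((N - n : ℕ) : ℂ) = (N : ℂ) - n := Nat.cast_sub hn.le
    have cNj1 : ((N - j - 1 : ℕ) : ℂ) = (N : ℂ) - j - 1 := by
      have : ((N - j - 1 : ℕ) : ℂ) = ((N - j : ℕ) : ℂ) - 1 := by
        exact_mod_cast Nat.cast_sub (show 1 ≤ N - j by omega)
      rw [this, Nat.cast_sub (show j ≤ N by omega)]
    simp only [Cc, e3, e4, e5, h1, h2, h3]
    push_cast [cNn, cNj1]
    rw [show n + 1 + (j + 1) = (n + j) + 2 by ring, show n + (j + 1) = (n + j) + 1 by ring,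
      pow_add, pow_add]
    linear_combination ((-1 : ℂ) ^ (n + j)) * ((N - j - 1).descFactorial (n - j - 1) : ℂ) * h4
  · rcases eq_or_lt_of_le hj with hj' | hj'
    · subst hj'
      have z3 : Cc N n (n + 1) = 0 := Cc_zero_of_lt _ (by omega)
      rw [z3, mul_zero, add_zero]
      simp only [Cc, Nat.sub_self, Nat.choose_self, Nat.descFactorial_zero, Nat.cast_one,
        mul_one]
      rw [show n + 1 + (n + 1) = (n + n) + 2 by ring, pow_add]
      ring
    · have z1 : Cc N (n + 1) (j + 1) = 0 := Cc_zero_of_lt _ (by omega)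
      have z2 : Cc N n j = 0 := Cc_zero_of_lt _ (by omega)
      have z3 : Cc N n (j + 1) = 0 := Cc_zero_of_lt _ (by omega)
      rw [z1, z2, z3]; ring

lemma wirtinger_sum {ι : Type*} {s : Finset ι} {F : ι → ℂ → ℂ} {τ : ℂ}
    (h : ∀ i ∈ s, DifferentiableAt ℝ (F i) τ) :
    wirtinger (fun z => ∑ i ∈ s, F i z) τ = ∑ i ∈ s, wirtinger (F i) τ := by
  unfold wirtinger
  rw [fderiv_fun_sum h]
  simp only [ContinuousLinearMap.coe_sum', Finset.sum_apply]
  rw [Finset.mul_sum, ← Finset.sum_sub_distrib, Finset.mul_sum]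

lemma wirtinger_const_mul {f : ℂ → ℂ} {τ : ℂ} (c : ℂ) (h : DifferentiableAt ℝ f τ) :
    wirtinger (fun z => c * f z) τ = c * wirtinger f τ := by
  unfold wirtinger
  rw [fderiv_const_mul h c]
  simp only [ContinuousLinearMap.smul_apply, smul_eq_mul]
  ring

lemma diff_VP (m : ℤ) (q : ℂ[X]) {τ : ℂ} (h : τ.im ≠ 0) :
    DifferentiableAt ℝ (fun z => Vp m z * q.eval z) τ :=
  ((hasFDerivAt_Vp m h).mul (hasFDerivAt_poly q τ)).differentiableAt

lemma raiseIter_eval (p : ℂ[X]) (N : ℕ) :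
    ∀ n, n ≤ N → ∀ τ : ℂ, τ.im ≠ 0 →
    raiseIter (-(N : ℤ)) n (fun z => p.eval z) τ
      = ∑ j ∈ Finset.range (n + 1),
          (Cc N n j * (2 * Complex.I) ^ j)
            * (Vp ((j : ℤ) - (n : ℤ)) τ * ((derivative^[j] p).eval τ)) := by
  intro n
  induction n with
  | zero =>
    intro _ τ h
    simp [raiseIter, Cc, Vp]
  | succ n IH =>
    intro hn τ h
    have hnN : n < N := hn
    have hv : ((τ.im : ℝ) : ℂ) ≠ 0 := by simpa using h
    -- eventual equality
    have hopen : ∀ᶠ z in nhds τ, z.im ≠ 0 := by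
      have : IsOpen {z : ℂ | z.im ≠ 0} := IsOpen.preimage Complex.continuous_im (isOpen_ne (x := (0 : ℝ)))
      exact this.eventually_mem h
    have hev : raiseIter (-(N : ℤ)) n (fun z => p.eval z)
        =ᶠ[nhds τ] (fun z => ∑ j ∈ Finset.range (n + 1),
          (Cc N n j * (2 * Complex.I) ^ j)
            * (Vp ((j : ℤ) - (n : ℤ)) z * ((derivative^[j] p).eval z))) :=
      hopen.mono fun z hz => IH hnN.le z hz
    show raise (-(N : ℤ) + 2 * (n : ℤ)) (raiseIter (-(N : ℤ)) n (fun z => p.eval z)) τ = _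
    rw [raise, wirtinger_congr hev, IH hnN.le τ h]
    rw [wirtinger_sum (fun j _ => ((diff_VP _ _ h).const_mul _))]
    have hw : ∀ j ∈ Finset.range (n + 1),
        wirtinger (fun z => (Cc N n j * (2 * Complex.I) ^ j)
            * (Vp ((j : ℤ) - (n : ℤ)) z * ((derivative^[j] p).eval z))) τ
          = (Cc N n j * (2 * Complex.I) ^ j)
              * (Vp ((j : ℤ) - (n : ℤ)) τ * ((derivative^[j + 1] p).eval τ)
                - Complex.I / 2 * ((j : ℂ) - (n : ℂ)) * Vp ((j : ℤ) - (n : ℤ) - 1) τ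
                    * ((derivative^[j] p).eval τ)) := by
      intro j _
      rw [wirtinger_const_mul _ (diff_VP _ _ h), wirtinger_Vp_mul _ _ h]
      rw [← Function.iterate_succ_apply' derivative j p]
      push_cast
      ring
    rw [Finset.sum_congr rfl hw]
    -- now pure algebra over the sums
    rw [Finset.mul_sum, Finset.mul_sum, ← Finset.sum_add_distrib]
    -- rewrite each summand into split form
    have hsplit : ∀ j ∈ Finset.range (n + 1),
        2 * Complex.I * ((Cc N n j * (2 * Complex.I) ^ j)
              * (Vp ((j : ℤ) - (n : ℤ)) τ * ((derivative^[j + 1] p).eval τ)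
                - Complex.I / 2 * ((j : ℂ) - (n : ℂ)) * Vp ((j : ℤ) - (n : ℤ) - 1) τ
                    * ((derivative^[j] p).eval τ)))
          + ((-(N : ℤ) + 2 * (n : ℤ) : ℤ) : ℂ) / ((τ.im : ℝ) : ℂ)
              * ((Cc N n j * (2 * Complex.I) ^ j)
                * (Vp ((j : ℤ) - (n : ℤ)) τ * ((derivative^[j] p).eval τ)))
        = (Cc N n j * (2 * Complex.I) ^ (j + 1))
            * (Vp ((j : ℤ) - (n : ℤ)) τ * ((derivative^[j + 1] p).eval τ))
          + (((j : ℂ) - (n : ℂ)) + (-(N : ℂ) + 2 * (n : ℂ)))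
              * ((Cc N n j * (2 * Complex.I) ^ j)
                * (Vp ((j : ℤ) - (n : ℤ) - 1) τ * ((derivative^[j] p).eval τ))) := by
      intro j _
      have hVp : Vp ((j : ℤ) - (n : ℤ)) τ = Vp ((j : ℤ) - (n : ℤ) - 1) τ * ((τ.im : ℝ) : ℂ) := by
        rw [Vp, Vp, ← zpow_add_one₀ hv]
        congr 1
        ring
      rw [hVp]
      field_simp
      push_cast
      ring_nf
      simp only [Complex.I_sq]
      ring
    rw [Finset.sum_congr rfl hsplit, Finset.sum_add_distrib]
    -- RHS manipulation
    conv_rhs => rw [Finset.sum_range_succ']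
    have hshift : ∀ x ∈ Finset.range (n + 1),
        (Cc N (n + 1) (x + 1) * (2 * Complex.I) ^ (x + 1))
            * (Vp (((x + 1 : ℕ) : ℤ) - ((n + 1 : ℕ) : ℤ)) τ * ((derivative^[x + 1] p).eval τ))
          = Cc N n x * (2 * Complex.I) ^ (x + 1)
              * (Vp ((x : ℤ) - (n : ℤ)) τ * ((derivative^[x + 1] p).eval τ))
            + ((n : ℂ) + x + 1 - N) * Cc N n (x + 1) * (2 * Complex.I) ^ (x + 1)
                * (Vp ((x : ℤ) - (n : ℤ)) τ * ((derivative^[x + 1] p).eval τ)) := by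
      intro x _
      have e : ((x + 1 : ℕ) : ℤ) - ((n + 1 : ℕ) : ℤ) = (x : ℤ) - (n : ℤ) := by push_cast; ring
      rw [e, Cc_succ_succ N n hnN x]
      ring
    rw [Finset.sum_congr rfl hshift, Finset.sum_add_distrib]
    have hzero : (Cc N (n + 1) 0 * (2 * Complex.I) ^ 0)
          * (Vp (((0 : ℕ) : ℤ) - ((n + 1 : ℕ) : ℤ)) τ * ((derivative^[0] p).eval τ))
        = ((n : ℂ) - N) * (Cc N n 0 * (2 * Complex.I) ^ 0
            * (Vp (((0 : ℕ) : ℤ) - (n : ℤ) - 1) τ * ((derivative^[0] p).eval τ))) := by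
      have e : ((0 : ℕ) : ℤ) - ((n + 1 : ℕ) : ℤ) = ((0 : ℕ) : ℤ) - (n : ℤ) - 1 := by
        push_cast; ring
      rw [e, Cc_succ_zero N n hnN]
      ring
    rw [hzero]
    -- remains: SB = ∑ B' + ((n-N) * B0-term)
    have hB : ∑ x ∈ Finset.range (n + 1),
          (((x : ℂ) - (n : ℂ)) + (-(N : ℂ) + 2 * (n : ℂ)))
            * ((Cc N n x * (2 * Complex.I) ^ x)
              * (Vp ((x : ℤ) - (n : ℤ) - 1) τ * ((derivative^[x] p).eval τ)))
        = ∑ x ∈ Finset.range (n + 1),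
            ((n : ℂ) + x + 1 - N) * Cc N n (x + 1) * (2 * Complex.I) ^ (x + 1)
              * (Vp ((x : ℤ) - (n : ℤ)) τ * ((derivative^[x + 1] p).eval τ))
          + ((n : ℂ) - N) * (Cc N n 0 * (2 * Complex.I) ^ 0
              * (Vp (((0 : ℕ) : ℤ) - (n : ℤ) - 1) τ * ((derivative^[0] p).eval τ))) := by
      rw [Finset.sum_range_succ'
        (fun x => (((x : ℂ) - (n : ℂ)) + (-(N : ℂ) + 2 * (n : ℂ)))
          * ((Cc N n x * (2 * Complex.I) ^ x)
            * (Vp ((x : ℤ) - (n : ℤ) - 1) τ * ((derivative^[x] p).eval τ))))]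
      rw [Finset.sum_range_succ
        (fun x => ((n : ℂ) + x + 1 - N) * Cc N n (x + 1) * (2 * Complex.I) ^ (x + 1)
          * (Vp ((x : ℤ) - (n : ℤ)) τ * ((derivative^[x + 1] p).eval τ)))]
      rw [Cc_zero_of_lt N (Nat.lt_succ_self n)]
      congr 1
      · rw [mul_zero, zero_mul, zero_mul, add_zero]
        refine Finset.sum_congr rfl fun x _ => ?_
        have e : ((x + 1 : ℕ) : ℤ) - (n : ℤ) - 1 = (x : ℤ) - (n : ℤ) := by push_cast; ring
        rw [e]
        push_cast
        ring
      · push_cast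
        ring
    rw [hB]
    ring


lemma eval_conj (q : ℂ[X]) (hq : q.map (starRingEnd ℂ) = q) (z : ℂ) :
    (starRingEnd ℂ) (q.eval z) = q.eval ((starRingEnd ℂ) z) := by
  conv_rhs => rw [← hq]
  rw [Polynomial.eval_map, Polynomial.eval₂_at_apply]


end FlipAux

open FlipAux Polynomial

/-- For a quadratic form `Q = [a,b,c]` of positive non-square discriminant `D`,
`𝔉_{2−2k}(Q(·,1)^{k−1})(τ) = −Q(τ,1)^{k−1}` on `ℍ`. -/
theorem flip_qval (k : ℕ) (hk : 2 ≤ k) (D : ℤ) (hD : 0 < D) (hDns : ¬ IsSquare D)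
    (a b c : ℤ) (hdisc : b ^ 2 - 4 * a * c = D) (τ : ℂ) (hτ : 0 < τ.im) :
    flipOp k (fun z => qval (a, b, c) z ^ (k - 1)) τ = - qval (a, b, c) τ ^ (k - 1) := by
  have hτ' : τ.im ≠ 0 := ne_of_gt hτ
  have hv : ((τ.im : ℝ) : ℂ) ≠ 0 := by simpa using hτ'
  set q0 : ℂ[X] := Polynomial.C (a : ℂ) * Polynomial.X ^ 2 + Polynomial.C (b : ℂ) * Polynomial.X
      + Polynomial.C (c : ℂ) with hq0
  set P : ℂ[X] := q0 ^ (k - 1) with hPdef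
  have hf : (fun z => qval (a, b, c) z ^ (k - 1)) = (fun z => P.eval z) := by
    funext z
    simp [qval, hPdef, hq0]
  have hfτ : qval (a, b, c) τ ^ (k - 1) = P.eval τ := congrFun hf τ
  have hκ : (2 - 2 * (k : ℤ)) = -((2 * k - 2 : ℕ) : ℤ) := by omega
  have hmap : P.map (starRingEnd ℂ) = P := by
    simp [hPdef, hq0, Polynomial.map_pow, Polynomial.map_add, Polynomial.map_mul, map_C, map_X]
  have hdeg : P.natDegree < 2 * k - 2 + 1 := by
    have h1 : P.natDegree ≤ (k - 1) * q0.natDegree := Polynomial.natDegree_pow_le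
    have h2 : q0.natDegree ≤ 2 := Polynomial.natDegree_quadratic_le
    have h3 : (k - 1) * q0.natDegree ≤ (k - 1) * 2 := Nat.mul_le_mul_left _ h2
    omega
  -- Taylor expansion of P at conj τ
  have hτsum : τ = 2 * Complex.I * ((τ.im : ℝ) : ℂ) + (starRingEnd ℂ) τ := by
    apply Complex.ext <;> simp <;> ring
  have htay : P.eval τ
      = ∑ j ∈ Finset.range (2 * k - 2 + 1),
          (Polynomial.hasseDeriv j P).eval ((starRingEnd ℂ) τ)
            * (2 * Complex.I * ((τ.im : ℝ) : ℂ)) ^ j := by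
    have hdeg' : (Polynomial.taylor ((starRingEnd ℂ) τ) P).natDegree < 2 * k - 2 + 1 := by
      rwa [Polynomial.natDegree_taylor]
    calc P.eval τ = (Polynomial.taylor ((starRingEnd ℂ) τ) P).eval
          (2 * Complex.I * ((τ.im : ℝ) : ℂ)) := by
          rw [Polynomial.taylor_eval, ← hτsum]
      _ = _ := by
          rw [Polynomial.eval_eq_sum_range' hdeg']
          exact Finset.sum_congr rfl fun j _ => by rw [Polynomial.taylor_coeff]
  rw [flipOp, hf, hκ, raiseIter_eval P (2 * k - 2) (2 * k - 2) le_rfl τ hτ', hfτ, htay,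
    map_sum, Finset.mul_sum, ← Finset.sum_neg_distrib]
  refine Finset.sum_congr rfl fun j hj => ?_
  have hjN : j ≤ 2 * k - 2 := by
    simpa [Nat.lt_succ_iff] using hj
  -- conjugation of the term
  have hCc : (starRingEnd ℂ) (Cc (2 * k - 2) (2 * k - 2) j) = Cc (2 * k - 2) (2 * k - 2) j := by
    simp [Cc]
  have h2I : (starRingEnd ℂ) ((2 * Complex.I) ^ j) = (-(2 * Complex.I)) ^ j := by
    rw [map_pow]
    congr 1
    simp [Complex.ext_iff]
  have hVpc : (starRingEnd ℂ) (Vp ((j : ℤ) - ((2 * k - 2 : ℕ) : ℤ)) τ)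
      = Vp ((j : ℤ) - ((2 * k - 2 : ℕ) : ℤ)) τ := by
    rw [Vp, map_zpow₀, Complex.conj_ofReal]
  have hDconj : (starRingEnd ℂ) ((derivative^[j] P).eval τ)
      = (derivative^[j] P).eval ((starRingEnd ℂ) τ) := by
    refine eval_conj _ ?_ τ
    rw [← Polynomial.iterate_derivative_map P (starRingEnd ℂ) j, hmap]
  rw [map_mul, map_mul, map_mul, hCc, h2I, hVpc, hDconj]
  -- hasse derivative
  have hhasse : (derivative^[j] P).eval ((starRingEnd ℂ) τ)
      = (j.factorial : ℂ) * (Polynomial.hasseDeriv j P).eval ((starRingEnd ℂ) τ) := by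
    rw [← Polynomial.factorial_smul_hasseDeriv]
    simp [nsmul_eq_mul]
  rw [hhasse]
  -- sign
  have hsign : Cc (2 * k - 2) (2 * k - 2) j * (-(2 * Complex.I)) ^ j
      = ((2 * k - 2).choose j : ℂ) * (((2 * k - 2) - j).factorial : ℂ)
          * (2 * Complex.I) ^ j := by
    have heven : ((-1 : ℂ)) ^ (2 * k - 2) = 1 := Even.neg_one_pow ⟨k - 1, by omega⟩
    rw [Cc, Nat.descFactorial_self, pow_add, heven]
    rcases Nat.even_or_odd j with hpar | hpar
    · rw [hpar.neg_one_pow, hpar.neg_pow]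
      ring
    · rw [hpar.neg_one_pow, hpar.neg_pow]
      ring
  rw [mul_assoc (Cc (2 * k - 2) (2 * k - 2) j)]
  rw [show Cc (2 * k - 2) (2 * k - 2) j * ((-(2 * Complex.I)) ^ j
        * (Vp ((j : ℤ) - ((2 * k - 2 : ℕ) : ℤ)) τ
          * ((j.factorial : ℂ) * (Polynomial.hasseDeriv j P).eval ((starRingEnd ℂ) τ))))
      = (Cc (2 * k - 2) (2 * k - 2) j * (-(2 * Complex.I)) ^ j)
          * (Vp ((j : ℤ) - ((2 * k - 2 : ℕ) : ℤ)) τ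
            * ((j.factorial : ℂ) * (Polynomial.hasseDeriv j P).eval ((starRingEnd ℂ) τ)))
    from by ring]
  rw [hsign]
  -- power of v
  have hvpow : ((τ.im : ℂ)) ^ (2 * k - 2) * Vp ((j : ℤ) - ((2 * k - 2 : ℕ) : ℤ)) τ
      = ((τ.im : ℂ)) ^ j := by
    rw [Vp, ← zpow_natCast ((τ.im : ℂ)) (2 * k - 2), ← zpow_natCast ((τ.im : ℂ)) j,
      ← zpow_add₀ hv]
    congr 1
    ring
  -- factorial identity
  have hNfac : (((2 * k - 2).factorial : ℕ) : ℂ) ≠ 0 :=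
    Nat.cast_ne_zero.mpr (Nat.factorial_ne_zero _)
  have hfact : ((2 * k - 2).choose j : ℂ) * (((2 * k - 2) - j).factorial : ℂ)
      * (j.factorial : ℂ) = ((2 * k - 2).factorial : ℂ) := by
    have h1 : (2 * k - 2).choose j * ((2 * k - 2) - j).factorial * j.factorial
        = (2 * k - 2).factorial := by
      rw [mul_right_comm]
      exact Nat.choose_mul_factorial_mul_factorial hjN
    exact_mod_cast h1
  have key : -(((τ.im : ℂ)) ^ (2 * k - 2) / (((2 * k - 2).factorial : ℕ) : ℂ))
        * ((((2 * k - 2).choose j : ℂ) * (((2 * k - 2) - j).factorial : ℂ)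
            * (2 * Complex.I) ^ j)
          * (Vp ((j : ℤ) - ((2 * k - 2 : ℕ) : ℤ)) τ
            * ((j.factorial : ℂ) * (Polynomial.hasseDeriv j P).eval ((starRingEnd ℂ) τ))))
      = -((((τ.im : ℂ)) ^ (2 * k - 2) * Vp ((j : ℤ) - ((2 * k - 2 : ℕ) : ℤ)) τ)
          * ((((2 * k - 2).choose j : ℂ) * (((2 * k - 2) - j).factorial : ℂ)
              * (j.factorial : ℂ)) / (((2 * k - 2).factorial : ℕ) : ℂ))
          * ((2 * Complex.I) ^ j * (Polynomial.hasseDeriv j P).eval ((starRingEnd ℂ) τ))) := by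
    ring
  rw [key, hvpow, hfact, div_self hNfac]
  ring

end
end
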